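/- A spatial h-spray induces a spatial nonlinear connection via jet-derivatives (Theorem 3.3 i): fix invertible real matrices A (p×p) and B (n×n), a symmetric invertible p×p real matrix h with transformed metric h̃ = (A⁻¹)ᵀ·h·(A⁻¹), and a real array D^k_{il} (k, i, l ∈ Fin n) symmetric in i and l. Let G, G̃ : (Fin n → Fin p → ℝ) → (Fin n → ℝ) be differentiable functions of the jet coordinates satisfying, for every jet matrix x, the h-spray law 2·G̃^k(B·x·A⁻¹) = 2·∑_j B^k_j·G^j(x) − ∑_{ε,β,i,l} h^{εβ}·D^k_{il}·x^i_ε·x^l_β. Define N^{(i)}_{(α)j}(x) = ∑_γ (∂G^i/∂x^j_γ)(x)·h_{γα} and Ñ^{(k)}_{(β)m}(y) = ∑_ε (∂G̃^k/∂y^m_ε)(y)·h̃_{εβ}. Then for every jet matrix x and all k, β, i: ∑_m Ñ^{(k)}_{(β)m}(B·x·A⁻¹)·B^m_i = ∑_{j,α} N^{(j)}_{(α)i}(x)·B^k_j·(A⁻¹)^α_β − ∑_{l,α} D^k_{il}·(A⁻¹)^α_β·x^l_α; that is, (N, Ñ) satisfies the spatial nonlinear connection transformation law with inhomogeneous term Q^k_{βi}(x)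 = ∑_{l,α} D^k_{il}(A⁻¹)^α_β x^l_α. -/

import Mathlib

open Matrix

section Helpers
variable {p n : ℕ}

/-- Evaluation of a jet matrix at `(m, ε)` as a continuous linear map. -/
noncomputable def Ev (m : Fin n) (ε : Fin p) : ((Fin n → Fin p → ℝ)) →L[ℝ] ℝ :=
  (ContinuousLinearMap.proj (R := ℝ) (φ := fun _ : Fin p => ℝ) ε).comp
    (ContinuousLinearMap.proj (R := ℝ) (φ := fun _ : Fin n => Fin p → ℝ) m)

@[simp] lemma Ev_apply (m : Fin n) (ε : Fin p) (v : Fin n → Fin p → ℝ) :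
    Ev m ε v = v m ε := rfl

lemma single_single_apply (i m : Fin n) (γ ε : Fin p) :
    (Pi.single i (Pi.single γ 1) : Fin n → Fin p → ℝ) m ε =
      (if m = i then (1:ℝ) else 0) * (if ε = γ then 1 else 0) := by
  rcases eq_or_ne m i with rfl | hm <;> simp [Pi.single_apply, *]

lemma clm_apply_eq_sum (L : ((Fin n → Fin p → ℝ)) →L[ℝ] ℝ) (v : Fin n → Fin p → ℝ) :
    L v = ∑ m, ∑ ε, v m ε * L (Pi.single m (Pi.single ε 1)) := by
  have hv : v = ∑ m, ∑ ε, v m ε • (Pi.single m (Pi.single ε 1) : Fin n → Fin p → ℝ) := by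
    ext j β
    simp only [Finset.sum_apply, Pi.smul_apply, Pi.single_apply, smul_eq_mul,
      mul_ite, mul_one, mul_zero]
    rw [Finset.sum_eq_single j, Finset.sum_eq_single β] <;> simp +contextual [eq_comm]
  conv_lhs => rw [hv]
  simp [smul_eq_mul]

/-- The linear jet transformation `x ↦ B·x·A⁻¹` as a continuous linear map. -/
noncomputable def Tlin (B : Matrix (Fin n) (Fin n) ℝ) (Ai : Matrix (Fin p) (Fin p) ℝ) :
    (Fin n → Fin p → ℝ) →L[ℝ] (Fin n → Fin p → ℝ) :=
  ContinuousLinearMap.pi fun i => ContinuousLinearMap.pi fun α =>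
    ∑ j, ∑ β, (B i j * Ai β α) • Ev j β

lemma Tlin_apply (B : Matrix (Fin n) (Fin n) ℝ) (Ai : Matrix (Fin p) (Fin p) ℝ)
    (y : Fin n → Fin p → ℝ) (i : Fin n) (α : Fin p) :
    Tlin B Ai y i α = ∑ j, ∑ β, B i j * Ai β α * y j β := by
  simp [Tlin, ContinuousLinearMap.sum_apply, smul_eq_mul]

lemma Tlin_single (B : Matrix (Fin n) (Fin n) ℝ) (Ai : Matrix (Fin p) (Fin p) ℝ)
    (i : Fin n) (γ : Fin p) (m : Fin n) (ε : Fin p) :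
    Tlin B Ai (Pi.single i (Pi.single γ 1)) m ε = B m i * Ai γ ε := by
  rw [Tlin_apply]
  simp only [Pi.single_apply, mul_ite, mul_one, mul_zero, apply_ite]
  rw [Finset.sum_eq_single i]
  · rw [Finset.sum_eq_single γ] <;> simp +contextual [eq_comm]
  · intro b _ hb; rw [Finset.sum_eq_zero]; intro c _; simp [hb]
  · simp

lemma reorder4 {ι₁ ι₂ ι₃ ι₄ : Type*} [Fintype ι₁] [Fintype ι₂] [Fintype ι₃] [Fintype ι₄]
    (F : ι₁ → ι₂ → ι₃ → ι₄ → ℝ) :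
    ∑ m, ∑ ε, ∑ γ, ∑ δ, F m ε γ δ = ∑ γ, ∑ δ, ∑ m, ∑ ε, F m ε γ δ :=
  calc ∑ m, ∑ ε, ∑ γ, ∑ δ, F m ε γ δ
      = ∑ m, ∑ γ, ∑ ε, ∑ δ, F m ε γ δ :=
        Finset.sum_congr rfl fun m _ => by rw [Finset.sum_comm]
    _ = ∑ γ, ∑ m, ∑ ε, ∑ δ, F m ε γ δ := by rw [Finset.sum_comm]
    _ = ∑ γ, ∑ m, ∑ δ, ∑ ε, F m ε γ δ :=
        Finset.sum_congr rfl fun γ _ => Finset.sum_congr rfl fun m _ => by rw [Finset.sum_comm]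
    _ = ∑ γ, ∑ δ, ∑ m, ∑ ε, F m ε γ δ :=
        Finset.sum_congr rfl fun γ _ => by rw [Finset.sum_comm]

end Helpers

set_option maxHeartbeats 2000000 in
theorem h_spray_induces_spatial_connection {p n : ℕ}
    (A : Matrix (Fin p) (Fin p) ℝ) (B : Matrix (Fin n) (Fin n) ℝ)
    (hA : IsUnit A) (hB : IsUnit B)
    (h : Matrix (Fin p) (Fin p) ℝ) (hh : IsUnit h) (hhsymm : h.IsSymm)
    (h' : Matrix (Fin p) (Fin p) ℝ) (hh' : h' = (A⁻¹)ᵀ * h * A⁻¹)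
    (D : Fin n → Fin n → Fin n → ℝ) (hD : ∀ k i l, D k i l = D k l i)
    (G G' : (Fin n → Fin p → ℝ) → (Fin n → ℝ))
    (hG : Differentiable ℝ G) (hG' : Differentiable ℝ G')
    (T : (Fin n → Fin p → ℝ) → (Fin n → Fin p → ℝ))
    (hT : ∀ x i α, T x i α = ∑ j, ∑ β, B i j * A⁻¹ β α * x j β)
    (hspray : ∀ x k, 2 * G' (T x) k =
      2 * (∑ j, B k j * G x j) -
        ∑ ε, ∑ β, ∑ i, ∑ l, h⁻¹ ε β * D k i l * x i ε * x l β)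
    (N : (Fin n → Fin p → ℝ) → Fin n → Fin p → Fin n → ℝ)
    (hN : ∀ x i α j, N x i α j =
      ∑ γ, fderiv ℝ (fun y => G y i) x (Pi.single j (Pi.single γ 1)) * h γ α)
    (N' : (Fin n → Fin p → ℝ) → Fin n → Fin p → Fin n → ℝ)
    (hN' : ∀ y k β m, N' y k β m =
      ∑ ε, fderiv ℝ (fun z => G' z k) y (Pi.single m (Pi.single ε 1)) * h' ε β) :
    ∀ x k β i, ∑ m, N' (T x) k β m * B m i =
      (∑ j, ∑ α, N x j α i * B k j * A⁻¹ α β) -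
        ∑ l, ∑ α, D k i l * A⁻¹ α β * x l α := by
  intro x k β i
  classical
  have hTfun : T = Tlin B A⁻¹ := by
    funext y j α; rw [hT, Tlin_apply]
  -- symmetry of h⁻¹
  have hinvsymm : ∀ a b : Fin p, h⁻¹ a b = h⁻¹ b a := by
    intro a b
    have hsi : (h⁻¹)ᵀ = h⁻¹ := by
      rw [Matrix.transpose_nonsing_inv, hhsymm.eq]
    exact congrFun (congrFun hsi.symm a) b
  have hdet : IsUnit h.det := (Matrix.isUnit_iff_isUnit_det h).mp hh
  have hhinv : h * h⁻¹ = 1 := Matrix.mul_nonsing_inv h hdet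
  have horth : ∀ δ δ' : Fin p, ∑ γ, h γ δ * h⁻¹ γ δ' = if δ = δ' then 1 else 0 := by
    intro δ δ'
    have := congrFun (congrFun hhinv δ) δ'
    rw [Matrix.mul_apply] at this
    rw [Matrix.one_apply] at this
    rw [← this]
    exact Finset.sum_congr rfl fun γ _ => by rw [hhsymm.apply, mul_comm, hinvsymm]
  -- differentiability of components
  have hG'k : Differentiable ℝ (fun z => G' z k) :=
    ((ContinuousLinearMap.proj (R := ℝ) (φ := fun _ : Fin n => ℝ) k).differentiable).comp hG'
  set Pk : ((Fin n → Fin p → ℝ)) →L[ℝ] ℝ := fderiv ℝ (fun z => G' z k) (T x) with hPkdef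
  have hPk : HasFDerivAt (fun z => G' z k) Pk (Tlin B A⁻¹ x) := by
    rw [← hTfun]; exact (hG'k (T x)).hasFDerivAt
  have hf : HasFDerivAt (fun y => 2 * G' (Tlin B A⁻¹ y) k)
      ((2:ℝ) • (Pk.comp (Tlin B A⁻¹))) x :=
    (hPk.comp x (Tlin B A⁻¹).hasFDerivAt).const_mul 2
  have hGj : ∀ j : Fin n, HasFDerivAt (fun y => G y j) (fderiv ℝ (fun y => G y j) x) x := by
    intro j
    exact (((ContinuousLinearMap.proj (R := ℝ) (φ := fun _ : Fin n => ℝ) j).differentiable).comp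
      hG x).hasFDerivAt
  have hg1 : HasFDerivAt (fun y => 2 * ∑ j, B k j * G y j)
      ((2:ℝ) • ∑ j, (B k j) • fderiv ℝ (fun y => G y j) x) x := by
    refine HasFDerivAt.const_mul ?_ 2
    exact HasFDerivAt.fun_sum fun j _ => (hGj j).const_mul (B k j)
  set Lq : ((Fin n → Fin p → ℝ)) →L[ℝ] ℝ :=
    ∑ ε, ∑ δ, ∑ i', ∑ l,
      ((h⁻¹ ε δ * D k i' l * x i' ε) • Ev l δ + x l δ • ((h⁻¹ ε δ * D k i' l) • Ev i' ε))
    with hLqdef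
  have hq : HasFDerivAt
      (fun y => ∑ ε, ∑ δ, ∑ i', ∑ l, h⁻¹ ε δ * D k i' l * y i' ε * y l δ) Lq x := by
    refine HasFDerivAt.fun_sum fun ε _ => HasFDerivAt.fun_sum fun δ _ =>
      HasFDerivAt.fun_sum fun i' _ => HasFDerivAt.fun_sum fun l _ => ?_
    exact (((Ev i' ε).hasFDerivAt (x := x)).const_mul _).mul ((Ev l δ).hasFDerivAt)
  have hg : HasFDerivAt (fun y => 2 * (∑ j, B k j * G y j) -
      ∑ ε, ∑ δ, ∑ i', ∑ l, h⁻¹ ε δ * D k i' l * y i' ε * y l δ)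
      (((2:ℝ) • ∑ j, (B k j) • fderiv ℝ (fun y => G y j) x) - Lq) x := hg1.sub hq
  have hfun : (fun y => 2 * G' (Tlin B A⁻¹ y) k) = (fun y => 2 * (∑ j, B k j * G y j) -
      ∑ ε, ∑ δ, ∑ i', ∑ l, h⁻¹ ε δ * D k i' l * y i' ε * y l δ) := by
    funext y; rw [← hTfun]; exact hspray y k
  have hderiv_eq : ((2:ℝ) • (Pk.comp (Tlin B A⁻¹))) =
      (((2:ℝ) • ∑ j, (B k j) • fderiv ℝ (fun y => G y j) x) - Lq) := by
    refine HasFDerivAt.unique ?_ hg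
    rw [← hfun]; exact hf
  -- the quadratic derivative applied to a basis direction
  have hLq : ∀ γ : Fin p, Lq (Pi.single i (Pi.single γ 1)) =
      2 * ∑ δ, ∑ l, h⁻¹ γ δ * D k i l * x l δ := by
    intro γ
    rw [hLqdef]
    simp only [ContinuousLinearMap.sum_apply, ContinuousLinearMap.add_apply,
      ContinuousLinearMap.smul_apply, Ev_apply, smul_eq_mul, single_single_apply]
    simp only [mul_ite, mul_one, mul_zero, ite_mul, zero_mul, one_mul,
      Finset.sum_ite_eq', Finset.mem_univ, if_true, Finset.sum_ite_irrel,
      Finset.sum_const_zero, Finset.sum_add_distrib]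
    rw [two_mul]
    congr 1
    · refine Finset.sum_congr rfl fun ε _ => Finset.sum_congr rfl fun i' _ => ?_
      rw [hinvsymm, hD k i' i]
    · exact Finset.sum_congr rfl fun δ _ => Finset.sum_congr rfl fun l _ => by ring
  -- key directional identity
  have key : ∀ γ : Fin p, ∑ m, ∑ ε, B m i * A⁻¹ γ ε * Pk (Pi.single m (Pi.single ε 1)) =
      (∑ j, B k j * fderiv ℝ (fun y => G y j) x (Pi.single i (Pi.single γ 1))) -
        ∑ δ, ∑ l, h⁻¹ γ δ * D k i l * x l δ := by
    intro γ
    have happ := congrFun (congrArg (fun (L : ((Fin n → Fin p → ℝ)) →L[ℝ] ℝ) => ⇑L) hderiv_eq)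
      (Pi.single i (Pi.single γ 1))
    simp only [ContinuousLinearMap.smul_apply, ContinuousLinearMap.coe_comp', Function.comp_apply,
      ContinuousLinearMap.sub_apply, ContinuousLinearMap.coe_sum', Finset.sum_apply,
      smul_eq_mul] at happ
    rw [hLq γ] at happ
    have hexp : Pk (Tlin B A⁻¹ (Pi.single i (Pi.single γ 1))) =
        ∑ m, ∑ ε, B m i * A⁻¹ γ ε * Pk (Pi.single m (Pi.single ε 1)) := by
      rw [clm_apply_eq_sum Pk (Tlin B A⁻¹ (Pi.single i (Pi.single γ 1)))]
      exact Finset.sum_congr rfl fun m _ => Finset.sum_congr rfl fun ε _ => by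
        rw [Tlin_single]
    rw [hexp] at happ
    linarith
  -- entries of the transformed metric
  have hh'e : ∀ ε b : Fin p, h' ε b = ∑ γ, ∑ δ, A⁻¹ γ ε * h γ δ * A⁻¹ δ b := by
    intro ε b
    rw [hh', Matrix.mul_apply]
    rw [Finset.sum_comm]
    refine Finset.sum_congr rfl fun γ _ => ?_
    rw [Matrix.mul_apply, Finset.sum_mul]
    exact Finset.sum_congr rfl fun δ _ => by rw [Matrix.transpose_apply]
  -- the two pieces of the final computation
  have hT1 : (∑ γ : Fin p, ∑ δ : Fin p,
        (∑ j, B k j * fderiv ℝ (fun y => G y j) x (Pi.single i (Pi.single γ 1))) *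
          (h γ δ * A⁻¹ δ β))
      = ∑ j, ∑ α, N x j α i * B k j * A⁻¹ α β := by
    calc (∑ γ : Fin p, ∑ δ : Fin p,
          (∑ j, B k j * fderiv ℝ (fun y => G y j) x (Pi.single i (Pi.single γ 1))) *
            (h γ δ * A⁻¹ δ β))
        = ∑ γ : Fin p, ∑ δ : Fin p, ∑ j,
            (B k j * fderiv ℝ (fun y => G y j) x (Pi.single i (Pi.single γ 1))) *
              (h γ δ * A⁻¹ δ β) := by
          exact Finset.sum_congr rfl fun γ _ => Finset.sum_congr rfl fun δ _ =>
            Finset.sum_mul _ _ _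
      _ = ∑ γ : Fin p, ∑ j, ∑ δ : Fin p,
            (B k j * fderiv ℝ (fun y => G y j) x (Pi.single i (Pi.single γ 1))) *
              (h γ δ * A⁻¹ δ β) := by
          exact Finset.sum_congr rfl fun γ _ => by rw [Finset.sum_comm]
      _ = ∑ j, ∑ γ : Fin p, ∑ δ : Fin p,
            (B k j * fderiv ℝ (fun y => G y j) x (Pi.single i (Pi.single γ 1))) *
              (h γ δ * A⁻¹ δ β) := by rw [Finset.sum_comm]
      _ = ∑ j, ∑ δ : Fin p, ∑ γ : Fin p,
            (B k j * fderiv ℝ (fun y => G y j) x (Pi.single i (Pi.single γ 1))) *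
              (h γ δ * A⁻¹ δ β) := by
          exact Finset.sum_congr rfl fun j _ => by rw [Finset.sum_comm]
      _ = ∑ j, ∑ α, N x j α i * B k j * A⁻¹ α β := by
          refine Finset.sum_congr rfl fun j _ => Finset.sum_congr rfl fun α _ => ?_
          rw [hN, Finset.sum_mul, Finset.sum_mul]
          exact Finset.sum_congr rfl fun γ _ => by ring
  have hT2 : (∑ γ : Fin p, ∑ δ : Fin p,
        (∑ δ' : Fin p, ∑ l, h⁻¹ γ δ' * D k i l * x l δ') * (h γ δ * A⁻¹ δ β))
      = ∑ l, ∑ α, D k i l * A⁻¹ α β * x l α := by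
    calc (∑ γ : Fin p, ∑ δ : Fin p,
          (∑ δ' : Fin p, ∑ l, h⁻¹ γ δ' * D k i l * x l δ') * (h γ δ * A⁻¹ δ β))
        = ∑ γ : Fin p, ∑ δ : Fin p, ∑ δ' : Fin p, ∑ l,
            (h γ δ * h⁻¹ γ δ') * (D k i l * x l δ' * A⁻¹ δ β) := by
          refine Finset.sum_congr rfl fun γ _ => Finset.sum_congr rfl fun δ _ => ?_
          rw [Finset.sum_mul]
          refine Finset.sum_congr rfl fun δ' _ => ?_
          rw [Finset.sum_mul]
          exact Finset.sum_congr rfl fun l _ => by ring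
      _ = ∑ δ' : Fin p, ∑ l, ∑ γ : Fin p, ∑ δ : Fin p,
            (h γ δ * h⁻¹ γ δ') * (D k i l * x l δ' * A⁻¹ δ β) := reorder4 _
      _ = ∑ δ' : Fin p, ∑ l, ∑ δ : Fin p, ∑ γ : Fin p,
            (h γ δ * h⁻¹ γ δ') * (D k i l * x l δ' * A⁻¹ δ β) := by
          exact Finset.sum_congr rfl fun δ' _ => Finset.sum_congr rfl fun l _ => by
            rw [Finset.sum_comm]
      _ = ∑ δ' : Fin p, ∑ l, ∑ δ : Fin p,
            (if δ = δ' then (1:ℝ) else 0) * (D k i l * x l δ' * A⁻¹ δ β) := by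
          refine Finset.sum_congr rfl fun δ' _ => Finset.sum_congr rfl fun l _ =>
            Finset.sum_congr rfl fun δ _ => ?_
          rw [← horth δ δ', Finset.sum_mul]
      _ = ∑ δ' : Fin p, ∑ l, D k i l * x l δ' * A⁻¹ δ' β := by
          refine Finset.sum_congr rfl fun δ' _ => Finset.sum_congr rfl fun l _ => ?_
          simp [ite_mul, Finset.sum_ite_eq]
      _ = ∑ l, ∑ α, D k i l * A⁻¹ α β * x l α := by
          rw [Finset.sum_comm]
          exact Finset.sum_congr rfl fun l _ => Finset.sum_congr rfl fun α _ => by ring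
  calc ∑ m, N' (T x) k β m * B m i
      = ∑ m, ∑ ε, ∑ γ : Fin p, ∑ δ : Fin p,
          (B m i * A⁻¹ γ ε * Pk (Pi.single m (Pi.single ε 1))) * (h γ δ * A⁻¹ δ β) := by
        refine Finset.sum_congr rfl fun m _ => ?_
        rw [hN', Finset.sum_mul]
        refine Finset.sum_congr rfl fun ε _ => ?_
        rw [← hPkdef, hh'e, Finset.mul_sum, Finset.sum_mul]
        refine Finset.sum_congr rfl fun γ _ => ?_
        rw [Finset.mul_sum, Finset.sum_mul]
        exact Finset.sum_congr rfl fun δ _ => by ring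
    _ = ∑ γ : Fin p, ∑ δ : Fin p, ∑ m, ∑ ε,
          (B m i * A⁻¹ γ ε * Pk (Pi.single m (Pi.single ε 1))) * (h γ δ * A⁻¹ δ β) := reorder4 _
    _ = ∑ γ : Fin p, ∑ δ : Fin p,
          (∑ m, ∑ ε, B m i * A⁻¹ γ ε * Pk (Pi.single m (Pi.single ε 1))) * (h γ δ * A⁻¹ δ β) := by
        refine Finset.sum_congr rfl fun γ _ => Finset.sum_congr rfl fun δ _ => ?_
        rw [Finset.sum_mul]
        exact Finset.sum_congr rfl fun m _ => (Finset.sum_mul _ _ _).symm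
    _ = ∑ γ : Fin p, ∑ δ : Fin p,
          ((∑ j, B k j * fderiv ℝ (fun y => G y j) x (Pi.single i (Pi.single γ 1))) -
            ∑ δ' : Fin p, ∑ l, h⁻¹ γ δ' * D k i l * x l δ') * (h γ δ * A⁻¹ δ β) := by
        exact Finset.sum_congr rfl fun γ _ => Finset.sum_congr rfl fun δ _ => by rw [key γ]
    _ = (∑ γ : Fin p, ∑ δ : Fin p,
          (∑ j, B k j * fderiv ℝ (fun y => G y j) x (Pi.single i (Pi.single γ 1))) *
            (h γ δ * A⁻¹ δ β))
        - ∑ γ : Fin p, ∑ δ : Fin p,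
            (∑ δ' : Fin p, ∑ l, h⁻¹ γ δ' * D k i l * x l δ') * (h γ δ * A⁻¹ δ β) := by
        simp only [sub_mul, Finset.sum_sub_distrib]
    _ = (∑ j, ∑ α, N x j α i * B k j * A⁻¹ α β) - ∑ l, ∑ α, D k i l * A⁻¹ α β * x l α := by
        rw [hT1, hT2]
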